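/- Every 2×2 column-stochastic real matrix A admits a classical Stinespring dilation with ancilla dimension D = 4: there exist a probability vector q on Fin 4 and a permutation π of Fin 2 × Fin 4 such that for all x, x' ∈ Fin 2: A x x' = ∑_{y' ∈ Fin 4, (π (x', y')).1 = x} q y'. -/

import Mathlib

private def stineF : Fin 2 × Fin 4 → Fin 2 × Fin 4
  | (0, 0) => (0, 0)
  | (0, 1) => (0, 1)
  | (0, 2) => (1, 0)
  | (0, 3) => (1, 1)
  | (1, 0) => (0, 2)
  | (1, 1) => (1, 2)
  | (1, 2) => (0, 3)
  | (1, 3) => (1, 3)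

private noncomputable def stinePerm : Equiv.Perm (Fin 2 × Fin 4) :=
  Equiv.ofBijective stineF (by decide)

/-- Every 2×2 column-stochastic matrix admits a classical Stinespring dilation
with ancilla dimension `D = 4`. -/
theorem one_bit_channel_stinespring (A : Fin 2 → Fin 2 → ℝ)
    (hA0 : ∀ x x', 0 ≤ A x x') (hA1 : ∀ x', ∑ x, A x x' = 1) :
    ∃ (q : Fin 4 → ℝ) (π : Equiv.Perm (Fin 2 × Fin 4)),
      (∀ y, 0 ≤ q y) ∧ (∑ y, q y = 1) ∧
      ∀ x x' : Fin 2,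
        A x x' = ∑ y' ∈ Finset.univ.filter (fun y' : Fin 4 => (π (x', y')).1 = x), q y' := by
  have h0 := hA1 0
  have h1 := hA1 1
  simp [Fin.sum_univ_two] at h0 h1
  refine ⟨![A 0 0 * A 0 1, A 0 0 * A 1 1, A 1 0 * A 0 1, A 1 0 * A 1 1], stinePerm, ?_, ?_, ?_⟩
  · intro y
    fin_cases y <;> simp <;> exact mul_nonneg (hA0 _ _) (hA0 _ _)
  · simp [Fin.sum_univ_four]; nlinarith
  · intro x x'
    fin_cases x <;> fin_cases x' <;>
      simp only [Finset.sum_filter, Fin.sum_univ_four] <;>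
      simp [stinePerm, Equiv.ofBijective, stineF] <;>
      [linear_combination -A 0 0 * h1; linear_combination -A 0 1 * h0;
       linear_combination -A 1 0 * h1; linear_combination -A 1 1 * h0]
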